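/- Let γ = {γ_{ij}}_{0 ≤ i+j ≤ 2n+1} with conj(γ_{ij}) = γ_{ji}, let M(n) be the moment matrix of the truncation γ^{(2n)}, and let B be the matrix with columns B_{conj(Z)^i Z^{n+1−i}} (for i = 0,...,n+1) built from the moments of degree up to 2n+1. Suppose W is any matrix with B = M(n) W. Then the Hermitian matrix C = W* M(n) W is persymmetric: writing C = (c_{ij})_{0 ≤ i,j ≤ n+1}, one has c_{n+1−j, n+1−i} = c_{i,j} for all i, j. -/

import Mathlib

open Matrix ComplexOrder

/-- If `B = M(n) * W`, where `M(n)` is the moment matrix of `γ` and `B` is the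
block of new columns indexed by the degree-`(n+1)` monomials, then the Hermitian
matrix `C = Wᴴ * M(n) * W` is persymmetric: `C (rev j) (rev i) = C i j`. -/
theorem momentExtension_persymmetric (n : ℕ) (γ : ℕ → ℕ → ℂ)
    (hsym : ∀ i j, i + j ≤ 2 * n + 1 → (starRingEnd ℂ) (γ i j) = γ j i)
    (M : Matrix {p : Fin (n+1) × Fin (n+1) // (p.1 : ℕ) + (p.2 : ℕ) ≤ n}
         {p : Fin (n+1) × Fin (n+1) // (p.1 : ℕ) + (p.2 : ℕ) ≤ n} ℂ)
    (hM : ∀ a b, M a b = γ ((b.1.1 : ℕ) + (a.1.2 : ℕ)) ((b.1.2 : ℕ) + (a.1.1 : ℕ)))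
    (B W : Matrix {p : Fin (n+1) × Fin (n+1) // (p.1 : ℕ) + (p.2 : ℕ) ≤ n}
           (Fin (n+2)) ℂ)
    -- the `i`-th column of `B` corresponds to the monomial `conj(z)^i z^(n+1-i)`
    (hB : ∀ a (i : Fin (n+2)),
      B a i = γ ((i : ℕ) + (a.1.2 : ℕ)) ((n + 1 - (i : ℕ)) + (a.1.1 : ℕ)))
    (hW : B = M * W) :
    ∀ i j : Fin (n+2), (Wᴴ * M * W) j.rev i.rev = (Wᴴ * M * W) i j := by
  intro i j
  let I := {p : Fin (n+1) × Fin (n+1) // (p.1 : ℕ) + (p.2 : ℕ) ≤ n}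
  let σ : I → I := fun a => ⟨(a.1.2, a.1.1), by simpa [Nat.add_comm] using a.2⟩
  have hσσ : ∀ a, σ (σ a) = a := fun a => rfl
  have hσbij : Function.Bijective σ :=
    Function.bijective_iff_has_inverse.2 ⟨σ, hσσ, hσσ⟩
  have hrev : ∀ k : Fin (n+2), (k.rev : ℕ) = n + 1 - (k : ℕ) := by
    intro k
    have := k.isLt
    simp [Fin.rev]
  have key : ∀ (a : I) (k : Fin (n+2)), B a k.rev = star (B (σ a) k) := by
    intro a k
    have hk : (k : ℕ) ≤ n + 1 := Nat.lt_succ_iff.mp k.isLt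
    have ha : (a.1.1 : ℕ) + (a.1.2 : ℕ) ≤ n := a.2
    have hσ1 : ((σ a).1.1 : ℕ) = (a.1.2 : ℕ) := rfl
    have hσ2 : ((σ a).1.2 : ℕ) = (a.1.1 : ℕ) := rfl
    rw [hB, hB, hσ1, hσ2, hrev,
      show n + 1 - (n + 1 - (k : ℕ)) = (k : ℕ) from by omega]
    exact (hsym _ _ (by omega)).symm
  have hC : Wᴴ * M * W = Wᴴ * B := by rw [hW, Matrix.mul_assoc]
  rw [hC]
  -- expand both sides
  have expand : ∀ (u v : Fin (n+2)),
      (Wᴴ * B) u v = ∑ a : I, star (W a u) * B a v := by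
    intro u v
    simp [Matrix.mul_apply, Matrix.conjTranspose_apply]
    rfl
  rw [expand, expand]
  -- left side
  have hL : ∀ a : I, star (W a j.rev) * B a i.rev
      = ∑ b : I, star (W a j.rev) * (star (M (σ a) b) * star (W b i)) := by
    intro a
    rw [key a i, hW, Matrix.mul_apply]
    rw [star_sum, Finset.mul_sum]
    congr 1
    ext b
    rw [star_mul']
  have hR : ∀ b : I, star (W b i) * B b j
      = ∑ a : I, star (W b i) * (star (M (σ b) a) * star (W a j.rev)) := by
    intro b
    have : B b j = star (B (σ b) j.rev) := by
      have := key b j.rev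
      rwa [Fin.rev_rev] at this
    rw [this, hW, Matrix.mul_apply, star_sum, Finset.mul_sum]
    congr 1
    ext a
    rw [star_mul']
  calc ∑ a : I, star (W a j.rev) * B a i.rev
      = ∑ a : I, ∑ b : I, star (W a j.rev) * (star (M (σ a) b) * star (W b i)) := by
        exact Finset.sum_congr rfl fun a _ => hL a
    _ = ∑ b : I, ∑ a : I, star (W a j.rev) * (star (M (σ a) b) * star (W b i)) :=
        Finset.sum_comm
    _ = ∑ b : I, ∑ a : I, star (W b i) * (star (M (σ b) a) * star (W a j.rev)) := by
        refine Finset.sum_congr rfl fun b _ => Finset.sum_congr rfl fun a _ => ?_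
        have hMs : M (σ a) b = M (σ b) a := by
          rw [hM, hM]
          show γ ((b.1.1 : ℕ) + (a.1.1 : ℕ)) ((b.1.2 : ℕ) + (a.1.2 : ℕ))
            = γ ((a.1.1 : ℕ) + (b.1.1 : ℕ)) ((a.1.2 : ℕ) + (b.1.2 : ℕ))
          rw [Nat.add_comm (b.1.1 : ℕ), Nat.add_comm (b.1.2 : ℕ)]
        rw [hMs]; ring
    _ = ∑ b : I, star (W b i) * B b j := by
        exact Finset.sum_congr rfl fun b _ => (hR b).symm
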